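/- For every x ∈ ℝ^n the following are equivalent: (i) there exists y ∈ ℝ^d such that x − A_V^T y ∈ [0,1)^n; (ii) for every circuit C of the linear matroid M(V), −|a_C^−| < ⟨a_C, x⟩ < |a_C^+| (this condition does not depend on the choice of sign of a_C). Equivalently, the image W(B) of [0,1)^n under the quotient map ℝ^n → ℝ^n / A_V^T ℝ^d is exactly the set cut out by the strict inequalities −|a_C^−| < a_C^*(z) < |a_C^+| over all circuits C of M(V). -/

import Mathlib

open Matrix

/-- The real vector obtained from an integer vector by coordinatewise casting. -/
noncomputable def rVec {d : ℕ} (v : Fin d → ℤ) : Fin d → ℝ := fun j => (v j : ℝ)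

/-- The cone `C(V)` generated by the vectors `V i` (viewed in `ℝ^d`). -/
def coneOf {d n : ℕ} (V : Fin n → Fin d → ℤ) : Set (Fin d → ℝ) :=
  {x | ∃ a : Fin n → ℝ, (∀ i, 0 ≤ a i) ∧ x = ∑ i, a i • rVec (V i)}

/-- The standing hypotheses on the generators: pairwise distinct, nonzero, primitive,
a minimal generating system of the cone, and the cone is strongly convex. -/
def GoodGens {d n : ℕ} (V : Fin n → Fin d → ℤ) : Prop :=
  Function.Injective V ∧
  (∀ i, V i ≠ 0) ∧
  (∀ i, Finset.univ.gcd (V i) = 1) ∧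
  (∀ i, ¬ ∃ a : Fin n → ℝ, (∀ j, 0 ≤ a j) ∧ a i = 0 ∧
      rVec (V i) = ∑ j, a j • rVec (V j)) ∧
  (∀ x ∈ coneOf V, -x ∈ coneOf V → x = 0)

/-- `C` is a circuit of the linear matroid `M(V)`: the family `(v_i)_{i ∈ C}` is
`ℝ`-linearly dependent but every proper subfamily is linearly independent. -/
def IsCircuitV {d n : ℕ} (V : Fin n → Fin d → ℤ) (C : Finset (Fin n)) : Prop :=
  (¬ LinearIndependent ℝ fun i : C => rVec (V i)) ∧
  ∀ C' : Finset (Fin n), C' ⊂ C → LinearIndependent ℝ fun i : C' => rVec (V i)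

open Finset
open scoped RealInnerProductSpace Pointwise

section Aux
variable {d n : ℕ}

/-- real kernel predicate -/
def rKer {d n : ℕ} (V : Fin n → Fin d → ℤ) (a : Fin n → ℝ) : Prop :=
  ∀ j, ∑ i, a i * (V i j : ℝ) = 0

noncomputable def suppF {n : ℕ} (a : Fin n → ℝ) : Finset (Fin n) :=
  Finset.univ.filter (fun i => a i ≠ 0)

lemma mem_suppF {a : Fin n → ℝ} {i : Fin n} : i ∈ suppF a ↔ a i ≠ 0 := by
  simp [suppF]

lemma ne_zero_iff_exists {a : Fin n → ℝ} : a ≠ 0 ↔ ∃ i, a i ≠ 0 := by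
  constructor
  · intro h
    by_contra hc
    push_neg at hc
    exact h (funext hc)
  · rintro ⟨i, hi⟩ rfl
    exact hi rfl

lemma max_mul_pos' {t c : ℝ} (ht : 0 < t) : max (t * c) 0 = t * max c 0 := by
  rcases le_or_gt c 0 with h | h
  · rw [max_eq_right h, max_eq_right (by nlinarith), mul_zero]
  · rw [max_eq_left h.le, max_eq_left (by nlinarith)]


lemma rKer_iff_sum {d n : ℕ} (V : Fin n → Fin d → ℤ) (a : Fin n → ℝ) :
    rKer V a ↔ ∑ i, a i • rVec (V i) = 0 := by
  constructor
  · intro h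
    funext j
    simpa [rVec, Finset.sum_apply] using h j
  · intro h j
    have := congrFun h j
    simpa [rVec, Finset.sum_apply] using this

lemma rKer_nonneg_eq_zero {d n : ℕ} {V : Fin n → Fin d → ℤ} (hV : GoodGens V)
    {a : Fin n → ℝ} (ha : rKer V a) (hpos : ∀ i, 0 ≤ a i) : a = 0 := by
  by_contra h
  obtain ⟨i₀, hi₀⟩ : ∃ i, a i ≠ 0 := by
    by_contra hc
    push_neg at hc
    exact h (funext hc)
  have hai₀ : 0 < a i₀ := (hpos i₀).lt_of_ne (Ne.symm hi₀)
  have hsum : ∑ i, a i • rVec (V i) = 0 := (rKer_iff_sum V a).1 ha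
  have key : ∑ i ∈ Finset.univ.erase i₀, a i • rVec (V i) = -(a i₀ • rVec (V i₀)) := by
    have h2 := Finset.sum_erase_add Finset.univ (fun i => a i • rVec (V i)) (Finset.mem_univ i₀)
    rw [hsum] at h2
    linear_combination (norm := module) h2
  have h1 : rVec (V i₀) ∈ coneOf V := by
    refine ⟨fun i => if i = i₀ then 1 else 0, fun i => by positivity, ?_⟩
    simp
  have h2 : -rVec (V i₀) ∈ coneOf V := by
    refine ⟨fun i => if i = i₀ then 0 else a i / a i₀, fun i => ?_, ?_⟩
    · by_cases hi : i = i₀ <;> simp [hi]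
      exact div_nonneg (hpos i) hai₀.le
    · rw [← Finset.sum_erase_add _ _ (Finset.mem_univ i₀)]
      simp only [if_pos rfl, zero_smul, add_zero]
      have : ∀ i ∈ Finset.univ.erase i₀,
          (if i = i₀ then 0 else a i / a i₀) • rVec (V i) = (a i₀)⁻¹ • (a i • rVec (V i)) := by
        intro i hi
        rw [if_neg (Finset.mem_erase.1 hi).1]
        rw [smul_smul, div_eq_inv_mul]
      rw [Finset.sum_congr rfl this, ← Finset.smul_sum, key, smul_neg, smul_smul,
        inv_mul_cancel₀ (ne_of_gt hai₀), one_smul]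
      simp
  have hzero := hV.2.2.2.2 _ h1 h2
  have hVne := hV.2.1 i₀
  apply hVne
  funext j
  have := congrFun hzero j
  simpa [rVec] using this

lemma sum_mul_lt_sum_max {n : ℕ} (b t : Fin n → ℝ) (ht0 : ∀ i, 0 ≤ t i)
    (ht1 : ∀ i, t i < 1) (hpos : ∃ i, 0 < b i) :
    ∑ i, b i * t i < ∑ i, max (b i) 0 := by
  obtain ⟨i₀, hi₀⟩ := hpos
  refine Finset.sum_lt_sum (fun i _ => ?_) ⟨i₀, Finset.mem_univ _, ?_⟩
  · rcases le_or_gt (b i) 0 with h | h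
    · have : b i * t i ≤ 0 := mul_nonpos_iff.2 (Or.inr ⟨h, ht0 i⟩)
      exact this.trans (le_max_right _ _)
    · rw [max_eq_left h.le]
      nlinarith [ht0 i, ht1 i]
  · rw [max_eq_left hi₀.le]
    nlinarith [ht0 i₀, ht1 i₀]


variable (V : Fin n → Fin d → ℤ)

lemma exists_rKer_of_not_linIndep (C : Finset (Fin n))
    (h : ¬ LinearIndependent ℝ fun i : C => rVec (V i)) :
    ∃ g : Fin n → ℝ, rKer V g ∧ (∃ i, g i ≠ 0) ∧ ∀ i, g i ≠ 0 → i ∈ C := by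
  classical
  rw [Fintype.not_linearIndependent_iff] at h
  obtain ⟨g, hsum, i, hi⟩ := h
  refine ⟨fun i => if h : i ∈ C then g ⟨i, h⟩ else 0, ?_, ⟨i, by simp [i.2, hi]⟩, ?_⟩
  · intro j
    have h1 : ∑ i : Fin n, (if h : i ∈ C then g ⟨i, h⟩ else 0) * (V i j : ℝ)
        = ∑ i ∈ C, (if h : i ∈ C then g ⟨i, h⟩ else 0) * (V i j : ℝ) :=
      (Finset.sum_subset (Finset.subset_univ C) (fun x _ hx => by simp [hx])).symm
    rw [h1, ← Finset.sum_attach C (fun i => (if h : i ∈ C then g ⟨i, h⟩ else 0) * (V i j : ℝ))]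
    have h2 := congrFun hsum j
    simp only [Finset.sum_apply, Pi.zero_apply, Pi.smul_apply, smul_eq_mul] at h2
    rw [← h2]
    refine Finset.sum_congr rfl (fun p _ => ?_)
    rw [dif_pos p.2]
    rfl
  · intro i hi'
    by_contra hc
    simp [hc] at hi'

lemma not_linIndep_of_rKer (C : Finset (Fin n)) (g : Fin n → ℝ)
    (hker : rKer V g) (hne : ∃ i, g i ≠ 0) (hsupp : ∀ i, g i ≠ 0 → i ∈ C) :
    ¬ LinearIndependent ℝ fun i : C => rVec (V i) := by
  classical
  rw [Fintype.not_linearIndependent_iff]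
  obtain ⟨i₀, hi₀⟩ := hne
  refine ⟨fun i => g i, ?_, ⟨⟨i₀, hsupp _ hi₀⟩, hi₀⟩⟩
  funext j
  have h2 : ∑ i : C, (g i • rVec (V i)) j = ∑ i : C, g i * (V i j : ℝ) := by
    refine Finset.sum_congr rfl (fun p _ => ?_)
    simp [rVec]
  have h3 : ∑ i : C, g (i : Fin n) * (V (i : Fin n) j : ℝ)
      = ∑ i ∈ C, g i * (V i j : ℝ) := Finset.sum_coe_sort C (fun i => g i * (V i j : ℝ))
  have h4 : ∑ i ∈ C, g i * (V i j : ℝ) = ∑ i : Fin n, g i * (V i j : ℝ) :=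
    Finset.sum_subset (Finset.subset_univ C) (fun x _ hx => by
      have : g x = 0 := by by_contra hgx; exact hx (hsupp _ hgx)
      simp [this])
  simp only [Finset.sum_apply]
  rw [h2, h3, h4, hker j]
  rfl

lemma rKer_circuit_unique {C : Finset (Fin n)} (hC : IsCircuitV V C)
    {c z : Fin n → ℝ} (hc : rKer V c) (hz : rKer V z)
    (hcsupp : ∀ i, c i ≠ 0 → i ∈ C) (hzsupp : ∀ i, z i ≠ 0 → i ∈ C)
    {i₀ : Fin n} (hci₀ : c i₀ ≠ 0) :
    z = fun i => (z i₀ / c i₀) * c i := by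
  classical
  have hi₀C : i₀ ∈ C := hcsupp _ hci₀
  set w : Fin n → ℝ := fun i => c i₀ * z i - z i₀ * c i with hw
  have hwker : rKer V w := by
    intro j
    have h1 := hc j
    have h2 := hz j
    have : ∑ i : Fin n, (c i₀ * z i - z i₀ * c i) * (V i j : ℝ)
        = c i₀ * ∑ i : Fin n, z i * (V i j : ℝ) - z i₀ * ∑ i : Fin n, c i * (V i j : ℝ) := by
      rw [Finset.mul_sum, Finset.mul_sum, ← Finset.sum_sub_distrib]
      exact Finset.sum_congr rfl (fun i _ => by ring)
    simp only [hw, this, h1, h2, mul_zero, sub_zero]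
  have hwzero : w = 0 := by
    by_contra hne
    have hne' : ∃ i, w i ≠ 0 := by
      by_contra hcon; push_neg at hcon; exact hne (funext hcon)
    have hsupp : ∀ i, w i ≠ 0 → i ∈ C.erase i₀ := by
      intro i hi
      rw [Finset.mem_erase]
      constructor
      · rintro rfl
        apply hi
        simp [hw]
        ring
      · by_contra hiC
        apply hi
        have hci : c i = 0 := by by_contra h'; exact hiC (hcsupp _ h')
        have hzi : z i = 0 := by by_contra h'; exact hiC (hzsupp _ h')
        simp [hw, hci, hzi]
    exact not_linIndep_of_rKer V _ w hwker hne' hsupp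
      (hC.2 (C.erase i₀) (Finset.erase_ssubset hi₀C))
  funext i
  have hwi : c i₀ * z i - z i₀ * c i = 0 := by
    have := congrFun hwzero i
    simpa [hw] using this
  field_simp
  linarith [hwi]

lemma circuit_int_vec {C : Finset (Fin n)} (hC : IsCircuitV V C) :
    ∃ a : Fin n → ℤ, (∀ j, ∑ i, a i * V i j = 0) ∧ Finset.univ.gcd a = 1 ∧
      (∀ i, a i ≠ 0 ↔ i ∈ C) := by
  classical
  obtain ⟨g, hgker, ⟨i₀, hgi₀⟩, hgsupp⟩ := exists_rKer_of_not_linIndep V C hC.1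
  have hi₀C : i₀ ∈ C := hgsupp _ hgi₀
  have hindep := hC.2 (C.erase i₀) (Finset.erase_ssubset hi₀C)
  set S := {x // x ∈ C.erase i₀}
  set Gz : Matrix S S ℤ := fun p q => ∑ j, V p j * V q j with hGz
  set bz : S → ℤ := fun p => ∑ j, V p j * V i₀ j with hbz
  set az : S → ℤ := Gz.adjugate *ᵥ bz with haz
  set Dz : ℤ := Gz.det with hDz
  set lam : S → ℝ := fun p => -(g p) / g i₀ with hlam
  -- coordinatewise expression of v i₀
  have hvi₀ : ∀ j, (V i₀ j : ℝ) = ∑ p : S, lam p * (V (p : Fin n) j : ℝ) := by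
    intro j
    have h1 : ∑ i ∈ C, g i * (V i j : ℝ) = 0 := by
      rw [Finset.sum_subset (Finset.subset_univ C) (fun x _ hx => by
        have : g x = 0 := by by_contra h'; exact hx (hgsupp _ h')
        simp [this])]
      exact hgker j
    have h2 : g i₀ * (V i₀ j : ℝ) + ∑ i ∈ C.erase i₀, g i * (V i j : ℝ) = 0 :=
      (Finset.add_sum_erase C (fun i => g i * (V i j : ℝ)) hi₀C).trans h1
    have h3 : ∑ p : S, lam p * (V (p : Fin n) j : ℝ)
        = ∑ i ∈ C.erase i₀, -(g i) / g i₀ * (V i j : ℝ) :=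
      Finset.sum_coe_sort (C.erase i₀) (fun i => -(g i) / g i₀ * (V i j : ℝ))
    rw [h3]
    have h4 : ∑ i ∈ C.erase i₀, -(g i) / g i₀ * (V i j : ℝ)
        = -(g i₀)⁻¹ * ∑ i ∈ C.erase i₀, g i * (V i j : ℝ) := by
      rw [Finset.mul_sum]
      refine Finset.sum_congr rfl (fun i _ => ?_)
      field_simp
    rw [h4]
    have h5 : ∑ i ∈ C.erase i₀, g i * (V i j : ℝ) = -(g i₀ * (V i₀ j : ℝ)) := by linarith
    rw [h5]
    field_simp
  -- b = G λ over ℝ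
  have hb : ∀ p : S, (bz p : ℝ) = ∑ q : S, (Gz p q : ℝ) * lam q := by
    intro p
    have : (bz p : ℝ) = ∑ j, (V (p : Fin n) j : ℝ) * (V i₀ j : ℝ) := by
      rw [hbz]; push_cast; ring_nf
    rw [this]
    have h6 : ∀ j, (V (p : Fin n) j : ℝ) * (V i₀ j : ℝ)
        = ∑ q : S, lam q * ((V (p : Fin n) j : ℝ) * (V (q : Fin n) j : ℝ)) := by
      intro j
      rw [hvi₀ j, Finset.mul_sum]
      exact Finset.sum_congr rfl (fun q _ => by ring)
    rw [Finset.sum_congr rfl (fun j _ => h6 j), Finset.sum_comm]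
    refine Finset.sum_congr rfl (fun q _ => ?_)
    rw [hGz]
    push_cast
    rw [Finset.sum_mul]
    exact Finset.sum_congr rfl (fun j _ => by ring)
  -- determinant nonzero
  have hmapdet : ((Dz : ℤ) : ℝ) = ((Int.castRingHom ℝ).mapMatrix Gz).det := by
    rw [hDz]
    exact RingHom.map_det (Int.castRingHom ℝ) Gz
  have hdet : (Dz : ℝ) ≠ 0 := by
    intro h0
    rw [hmapdet] at h0
    obtain ⟨v, hvne, hv⟩ := Matrix.exists_mulVec_eq_zero_iff.2 h0
    set u : Fin d → ℝ := fun j => ∑ p : S, v p * (V (p : Fin n) j : ℝ) with hu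
    have inner : ∀ p : S, ∑ j, (V (p : Fin n) j : ℝ) * u j = 0 := by
      intro p
      have e1 : ∀ j, (V (p : Fin n) j : ℝ) * u j
          = ∑ q : S, (V (p : Fin n) j : ℝ) * (v q * (V (q : Fin n) j : ℝ)) := by
        intro j
        rw [hu, Finset.mul_sum]
      rw [Finset.sum_congr rfl (fun j _ => e1 j), Finset.sum_comm]
      have e2 : ∀ q : S, ∑ j, (V (p : Fin n) j : ℝ) * (v q * (V (q : Fin n) j : ℝ))
          = ((Int.castRingHom ℝ).mapMatrix Gz) p q * v q := by
        intro q
        show ∑ j, (V (p : Fin n) j : ℝ) * (v q * (V (q : Fin n) j : ℝ)) = ((Gz p q : ℤ) : ℝ) * v q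
        rw [hGz]
        push_cast
        rw [Finset.sum_mul]
        exact Finset.sum_congr rfl (fun j _ => by ring)
      rw [Finset.sum_congr rfl (fun q _ => e2 q)]
      have := congrFun hv p
      simpa [Matrix.mulVec, dotProduct] using this
    have husq : ∑ j, (u j) ^ 2 = 0 := by
      have e3 : ∀ j, (u j) ^ 2 = ∑ p : S, v p * ((V (p : Fin n) j : ℝ) * u j) := by
        intro j
        rw [sq]
        calc u j * u j = (∑ p : S, v p * (V (p : Fin n) j : ℝ)) * u j := rfl
          _ = ∑ p : S, v p * ((V (p : Fin n) j : ℝ) * u j) := by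
              rw [Finset.sum_mul]
              exact Finset.sum_congr rfl (fun p _ => by ring)
      rw [Finset.sum_congr rfl (fun j _ => e3 j), Finset.sum_comm]
      refine Finset.sum_eq_zero (fun p _ => ?_)
      rw [← Finset.mul_sum, inner p, mul_zero]
    have huj : ∀ j, u j = 0 := by
      intro j
      have := (Finset.sum_eq_zero_iff_of_nonneg (fun j _ => sq_nonneg (u j))).1 husq j
        (Finset.mem_univ j)
      exact (pow_eq_zero_iff two_ne_zero).1 this
    have : v = 0 := by
      have hzero : ∑ p : S, v p • (fun i : S => rVec (V (i : Fin n))) p = 0 := by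
        funext j
        simp only [Finset.sum_apply, Pi.smul_apply, Pi.zero_apply, smul_eq_mul, rVec]
        have := huj j
        rw [hu] at this
        exact this
      have := Fintype.linearIndependent_iff.1 hindep v hzero
      funext p; exact this p
    exact hvne this
  -- az = Dz • lam over ℝ
  have hbr : (fun q => (bz q : ℝ)) = ((Int.castRingHom ℝ).mapMatrix Gz) *ᵥ lam := by
    funext p
    rw [hb p]
    simp [Matrix.mulVec, dotProduct, RingHom.mapMatrix_apply, Matrix.map_apply]
  have hazr : ∀ p : S, (az p : ℝ) = (Dz : ℝ) * lam p := by
    have h7 : (fun p => (az p : ℝ))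
        = ((Int.castRingHom ℝ).mapMatrix Gz).adjugate *ᵥ (fun q => (bz q : ℝ)) := by
      rw [← RingHom.map_adjugate]
      funext p
      simp only [haz, Matrix.mulVec, dotProduct, RingHom.mapMatrix_apply,
        Matrix.map_apply]
      push_cast
      rfl
    intro p
    rw [congrFun h7 p, hbr, Matrix.mulVec_mulVec, Matrix.adjugate_mul,
      Matrix.smul_mulVec, Matrix.one_mulVec, hmapdet]
    simp
  -- assemble the integer vector
  set a₀ : Fin n → ℤ :=
    fun i => if h : i ∈ C.erase i₀ then az ⟨i, h⟩ else if i = i₀ then -Dz else 0 with ha₀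
  have hDzne : Dz ≠ 0 := fun h => hdet (by rw [h]; simp)
  have hcast : ∀ i, (a₀ i : ℝ) = (-(Dz : ℝ) / g i₀) * g i := by
    intro i
    rw [ha₀]
    by_cases h1 : i ∈ C.erase i₀
    · simp only [dif_pos h1]
      rw [hazr ⟨i, h1⟩, hlam]
      field_simp
    · simp only [dif_neg h1]
      by_cases h2 : i = i₀
      · subst h2
        rw [if_pos rfl]
        push_cast
        field_simp
      · rw [if_neg h2]
        have hgi : g i = 0 := by
          by_contra h3
          exact h1 (Finset.mem_erase.2 ⟨h2, hgsupp _ h3⟩)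
        simp [hgi]
  have hkerr : rKer V (fun i => (a₀ i : ℝ)) := by
    intro j
    show ∑ i, (a₀ i : ℝ) * (V i j : ℝ) = 0
    have e4 : ∀ i : Fin n, ((a₀ i : ℝ)) * (V i j : ℝ)
        = (-(Dz : ℝ) / g i₀) * (g i * (V i j : ℝ)) := by
      intro i; rw [hcast i]; ring
    calc ∑ i, (a₀ i : ℝ) * (V i j : ℝ)
        = ∑ i, (-(Dz : ℝ) / g i₀) * (g i * (V i j : ℝ)) :=
          Finset.sum_congr rfl (fun i _ => e4 i)
      _ = (-(Dz : ℝ) / g i₀) * ∑ i, g i * (V i j : ℝ) := (Finset.mul_sum _ _ _).symm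
      _ = 0 := by rw [hgker j, mul_zero]
  have hker₀ : ∀ j, ∑ i, a₀ i * V i j = 0 := by
    intro j
    have h : ∑ i, ((a₀ i : ℝ)) * ((V i j : ℤ) : ℝ) = 0 := hkerr j
    exact_mod_cast h
  have ha₀i₀ : a₀ i₀ = -Dz := by
    simp only [ha₀]
    rw [dif_neg (fun h => (Finset.mem_erase.1 h).1 rfl)]
    simp
  have ha₀i₀ne : a₀ i₀ ≠ 0 := by
    rw [ha₀i₀]
    exact neg_ne_zero.2 hDzne
  have ha₀supp : ∀ i, a₀ i ≠ 0 → i ∈ C := by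
    intro i hi
    simp only [ha₀] at hi
    by_cases h1 : i ∈ C.erase i₀
    · exact (Finset.mem_erase.1 h1).2
    · rw [dif_neg h1] at hi
      by_cases h2 : i = i₀
      · subst h2; exact hi₀C
      · rw [if_neg h2] at hi; exact absurd rfl hi
  have ha₀full : ∀ i ∈ C, a₀ i ≠ 0 := by
    intro i₁ hi₁ h0
    by_cases h2 : i₁ = i₀
    · subst h2; exact ha₀i₀ne h0
    · refine not_linIndep_of_rKer V (C.erase i₁) (fun i => (a₀ i : ℝ)) hkerr
        ⟨i₀, by simpa using ha₀i₀ne⟩ ?_ (hC.2 _ (Finset.erase_ssubset hi₁))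
      intro i hi
      have hiZ : a₀ i ≠ 0 := by simpa using hi
      refine Finset.mem_erase.2 ⟨?_, ha₀supp i hiZ⟩
      rintro rfl
      exact hiZ h0
  set G0 : ℤ := Finset.univ.gcd a₀ with hG0
  have hG0dvd : ∀ i, G0 ∣ a₀ i := fun i => Finset.gcd_dvd (Finset.mem_univ i)
  have hG0ne : G0 ≠ 0 := by
    rw [hG0]
    intro h
    rw [Finset.gcd_eq_zero_iff] at h
    exact ha₀i₀ne (h i₀ (Finset.mem_univ i₀))
  refine ⟨fun i => a₀ i / G0, ?_, ?_, ?_⟩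
  · intro j
    have hj := hker₀ j
    have e5 : G0 * ∑ i, a₀ i / G0 * V i j = ∑ i, a₀ i * V i j := by
      rw [Finset.mul_sum]
      refine Finset.sum_congr rfl (fun i _ => ?_)
      rw [← mul_assoc, Int.mul_ediv_cancel' (hG0dvd i)]
    rcases mul_eq_zero.1 (e5.trans hj) with h | h
    · exact absurd h hG0ne
    · exact h
  · exact Finset.gcd_div_eq_one (Finset.mem_univ i₀) ha₀i₀ne
  · intro i
    constructor
    · intro hi
      have hi' : a₀ i / G0 ≠ 0 := hi
      refine ha₀supp i (fun h0 => hi' ?_)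
      rw [h0]
      exact Int.zero_ediv G0
    · intro hi h0
      have h0' : a₀ i / G0 = 0 := h0
      have h10 := Int.mul_ediv_cancel' (hG0dvd i)
      rw [h0', mul_zero] at h10
      exact ha₀full i hi h10.symm

lemma rKer_sub_smul {a w : Fin n → ℝ} (ha : rKer V a) (hw : rKer V w) (t : ℝ) :
    rKer V (fun i => a i - t * w i) := by
  intro j
  have e : ∑ i, (a i - t * w i) * (V i j : ℝ)
      = ∑ i, a i * (V i j : ℝ) - t * ∑ i, w i * (V i j : ℝ) := by
    rw [Finset.mul_sum, ← Finset.sum_sub_distrib]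
    exact Finset.sum_congr rfl (fun i _ => by ring)
  rw [e, ha j, hw j, mul_zero, sub_zero]

lemma exists_conformal_circuit :
    ∀ N : ℕ, ∀ a : Fin n → ℝ, rKer V a → a ≠ 0 → (suppF a).card ≤ N →
    ∃ z : Fin n → ℝ, rKer V z ∧ z ≠ 0 ∧ (∀ i, 0 ≤ a i * z i) ∧
      (∀ i, z i ≠ 0 → a i ≠ 0) ∧ IsCircuitV V (suppF z) := by
  intro N
  induction N with
  | zero =>
    intro a hker hne hcard
    exfalso
    obtain ⟨i, hi⟩ := ne_zero_iff_exists.1 hne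
    have : i ∈ suppF a := mem_suppF.2 hi
    have := Finset.card_pos.2 ⟨i, this⟩
    omega
  | succ N ih =>
    intro a hker hne hcard
    by_cases hcirc : ∀ C' : Finset (Fin n), C' ⊂ suppF a →
        LinearIndependent ℝ (fun i : C' => rVec (V i))
    · refine ⟨a, hker, hne, fun i => mul_self_nonneg _, fun i h => h, ?_, hcirc⟩
      exact not_linIndep_of_rKer V _ a hker (ne_zero_iff_exists.1 hne)
        (fun i h => mem_suppF.2 h)
    · push_neg at hcirc
      obtain ⟨C', hC'sub, hC'dep⟩ := hcirc
      obtain ⟨w, hwker, hwne, hwsupp⟩ := exists_rKer_of_not_linIndep V C' hC'dep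
      have hwsuppa : ∀ i, w i ≠ 0 → a i ≠ 0 := fun i hi =>
        mem_suppF.1 (hC'sub.1 (hwsupp i hi))
      obtain ⟨i₁, hi₁⟩ := hwne
      obtain ⟨im, himmem, himmin⟩ := Finset.exists_min_image (suppF w)
        (fun i => |a i| / |w i|) ⟨i₁, mem_suppF.2 hi₁⟩
      have hwim : w im ≠ 0 := mem_suppF.1 himmem
      have haim : a im ≠ 0 := hwsuppa im hwim
      set t : ℝ := a im / w im with ht
      set a' : Fin n → ℝ := fun i => a i - t * w i with ha'
      have hker' : rKer V a' := rKer_sub_smul V hker hwker t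
      have ha'im : a' im = 0 := by
        simp only [ha', ht]
        field_simp
        ring
      have ha'supp : ∀ i, a' i ≠ 0 → a i ≠ 0 := by
        intro i hi
        by_contra h0
        have hwi : w i = 0 := by
          by_contra hw0
          exact hwsuppa i hw0 h0
        apply hi
        simp [ha', h0, hwi]
      -- |t * w i| ≤ |a i| on supp w
      have habs : ∀ i, w i ≠ 0 → |t * w i| ≤ |a i| := by
        intro i hwi
        have h1 := himmin i (mem_suppF.2 hwi)
        have h2 : |t| ≤ |a i| / |w i| := by
          rw [ht, abs_div]
          exact h1
        rw [abs_mul]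
        calc |t| * |w i| ≤ (|a i| / |w i|) * |w i| :=
              mul_le_mul_of_nonneg_right h2 (abs_nonneg _)
          _ = |a i| := by field_simp
      have hconf' : ∀ i, 0 ≤ a i * a' i := by
        intro i
        by_cases hwi : w i = 0
        · simp only [ha', hwi, mul_zero, sub_zero]
          exact mul_self_nonneg _
        · have h1 : a i * (t * w i) ≤ |a i| * |t * w i| := by
            calc a i * (t * w i) ≤ |a i * (t * w i)| := le_abs_self _
              _ = |a i| * |t * w i| := abs_mul _ _
          have h2 : |a i| * |t * w i| ≤ |a i| * |a i| :=
            mul_le_mul_of_nonneg_left (habs i hwi) (abs_nonneg _)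
          have h3 : |a i| * |a i| = a i * a i := abs_mul_abs_self _
          have : a i * a' i = a i * a i - a i * (t * w i) := by
            simp only [ha']; ring
          rw [this]
          linarith
      have ha'ne : a' ≠ 0 := by
        intro h0
        obtain ⟨i₂, hi₂a, hi₂C⟩ := Finset.exists_of_ssubset hC'sub
        have hwi₂ : w i₂ = 0 := by
          by_contra hw0
          exact hi₂C (hwsupp i₂ hw0)
        have : a' i₂ = a i₂ := by simp [ha', hwi₂]
        have hai₂ : a i₂ ≠ 0 := mem_suppF.1 hi₂a
        rw [congrFun h0 i₂] at this
        exact hai₂ this.symm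
      have hcard' : (suppF a').card ≤ N := by
        have hsub : suppF a' ⊆ (suppF a).erase im := by
          intro i hi
          have hai' : a' i ≠ 0 := mem_suppF.1 hi
          refine Finset.mem_erase.2 ⟨?_, mem_suppF.2 (ha'supp i hai')⟩
          rintro rfl
          exact hai' ha'im
        have h4 := Finset.card_le_card hsub
        have h5 : ((suppF a).erase im).card = (suppF a).card - 1 :=
          Finset.card_erase_of_mem (mem_suppF.2 haim)
        omega
      obtain ⟨z, hzker, hzne, hzconf, hzsupp, hzcirc⟩ := ih a' hker' ha'ne hcard'
      refine ⟨z, hzker, hzne, ?_, ?_, hzcirc⟩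
      · intro i
        by_cases hzi : z i = 0
        · simp [hzi]
        · have ha'i : a' i ≠ 0 := hzsupp i hzi
          have hai : a i ≠ 0 := ha'supp i ha'i
          have h6 : 0 < a' i * z i := lt_of_le_of_ne (hzconf i)
            (Ne.symm (mul_ne_zero ha'i hzi))
          have h7 : 0 < a i * a' i := lt_of_le_of_ne (hconf' i)
            (Ne.symm (mul_ne_zero hai ha'i))
          nlinarith [mul_pos h7 h6, sq_nonneg (a' i)]
      · intro i hzi
        exact ha'supp i (hzsupp i hzi)

lemma sum_lt_max_of_circuits (x : Fin n → ℝ)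
    (H : ∀ C : Finset (Fin n), IsCircuitV V C →
      ∀ a : Fin n → ℤ, (∀ j, ∑ i, a i * V i j = 0) → Finset.univ.gcd a = 1 →
        (∀ i, a i ≠ 0 ↔ i ∈ C) →
        (-(∑ i, max (-(a i : ℝ)) 0) < ∑ i, (a i : ℝ) * x i ∧
          ∑ i, (a i : ℝ) * x i < ∑ i, max ((a i : ℝ)) 0)) :
    ∀ N : ℕ, ∀ a : Fin n → ℝ, rKer V a → a ≠ 0 → (suppF a).card ≤ N →
      ∑ i, a i * x i < ∑ i, max (a i) 0 := by
  intro N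
  induction N with
  | zero =>
    intro a hker hne hcard
    exfalso
    obtain ⟨i, hi⟩ := ne_zero_iff_exists.1 hne
    have := Finset.card_pos.2 ⟨i, mem_suppF.2 hi⟩
    omega
  | succ N ih =>
    intro a hker hne hcard
    obtain ⟨z, hzker, hzne, hconf, hzsupp, hzcirc⟩ :=
      exists_conformal_circuit V (N + 1) a hker hne hcard
    -- base case: the statement for z
    obtain ⟨aC, haCker, haCgcd, haCsupp⟩ := circuit_int_vec V hzcirc
    obtain ⟨hlt1, hlt2⟩ := H (suppF z) hzcirc aC haCker haCgcd haCsupp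
    set c : Fin n → ℝ := fun i => (aC i : ℝ) with hc
    have hcker : rKer V c := by
      intro j
      have h0 := haCker j
      have h1 : ((∑ i, aC i * V i j : ℤ) : ℝ) = 0 := by rw [h0]; simp
      push_cast at h1
      exact h1
    obtain ⟨i₀, hzi₀⟩ := ne_zero_iff_exists.1 hzne
    have hci₀ : c i₀ ≠ 0 := by
      simp only [hc, ne_eq, Int.cast_eq_zero]
      exact (haCsupp i₀).2 (mem_suppF.2 hzi₀)
    have hzeq := rKer_circuit_unique V hzcirc hcker hzker
      (fun i hi => (haCsupp i).1 (by simpa [hc] using hi)) (fun i hi => mem_suppF.2 hi) hci₀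
    set t : ℝ := z i₀ / c i₀ with htdef
    have htne : t ≠ 0 := div_ne_zero hzi₀ hci₀
    have hzi : ∀ i, z i = t * c i := fun i => congrFun hzeq i
    have hfz : ∑ i, z i * x i < ∑ i, max (z i) 0 := by
      rcases htne.lt_or_gt with htneg | htpos
      · have e1 : ∑ i, z i * x i = t * ∑ i, c i * x i := by
          rw [Finset.mul_sum]
          exact Finset.sum_congr rfl (fun i _ => by rw [hzi i]; ring)
        have e2 : ∑ i, max (z i) 0 = (-t) * ∑ i, max (-(c i)) 0 := by
          rw [Finset.mul_sum]
          refine Finset.sum_congr rfl (fun i _ => ?_)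
          rw [hzi i, show t * c i = (-t) * (-(c i)) by ring, max_mul_pos' (by linarith)]
        rw [e1, e2]
        have h5 : t * ∑ i, c i * x i < t * (-(∑ i, max (-(c i)) 0)) := by
          apply mul_lt_mul_of_neg_left _ htneg
          exact hlt1
        calc t * ∑ i, c i * x i < t * (-(∑ i, max (-(c i)) 0)) := h5
          _ = (-t) * ∑ i, max (-(c i)) 0 := by ring
      · have e1 : ∑ i, z i * x i = t * ∑ i, c i * x i := by
          rw [Finset.mul_sum]
          exact Finset.sum_congr rfl (fun i _ => by rw [hzi i]; ring)
        have e2 : ∑ i, max (z i) 0 = t * ∑ i, max (c i) 0 := by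
          rw [Finset.mul_sum]
          exact Finset.sum_congr rfl (fun i _ => by rw [hzi i, max_mul_pos' htpos])
        rw [e1, e2]
        exact mul_lt_mul_of_pos_left hlt2 htpos
    -- split a = s • z + a''
    have hprod : ∀ i, z i ≠ 0 → 0 < a i * z i := fun i hzi0 =>
      lt_of_le_of_ne (hconf i) (Ne.symm (mul_ne_zero (hzsupp i hzi0) hzi0))
    have hratio : ∀ i, z i ≠ 0 → 0 < a i / z i := by
      intro i hzi0
      rcases mul_pos_iff.1 (hprod i hzi0) with ⟨h1, h2⟩ | ⟨h1, h2⟩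
      · exact div_pos h1 h2
      · exact div_pos_iff.2 (Or.inr ⟨h1, h2⟩)
    obtain ⟨im, himmem, himmin⟩ := Finset.exists_min_image (suppF z)
      (fun i => a i / z i) ⟨i₀, mem_suppF.2 hzi₀⟩
    have hzim : z im ≠ 0 := mem_suppF.1 himmem
    have haim : a im ≠ 0 := hzsupp im hzim
    set s : ℝ := a im / z im with hsdef
    have hs : 0 < s := hratio im hzim
    set a'' : Fin n → ℝ := fun i => a i - s * z i with ha''def
    have hker'' : rKer V a'' := rKer_sub_smul V hker hzker s
    have ha''im : a'' im = 0 := by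
      simp only [ha''def, hsdef]
      field_simp
      ring
    have ha''supp : ∀ i, a'' i ≠ 0 → a i ≠ 0 := by
      intro i hi
      by_contra h0
      have hzi0 : z i = 0 := by
        by_contra hz0
        exact hzsupp i hz0 h0
      exact hi (by simp [ha''def, h0, hzi0])
    have hsplitmax : ∀ i, max (a i) 0 = s * max (z i) 0 + max (a'' i) 0 := by
      intro i
      by_cases hzi0 : z i = 0
      · have : a'' i = a i := by simp [ha''def, hzi0]
        rw [this, hzi0]
        simp
      · have hcge : s ≤ a i / z i := himmin i (mem_suppF.2 hzi0)
        have h6 : a'' i = z i * (a i / z i - s) := by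
          simp only [ha''def]
          field_simp
        have hcc : 0 ≤ a i / z i - s := by linarith
        rcases mul_pos_iff.1 (hprod i hzi0) with ⟨h1, h2⟩ | ⟨h1, h2⟩
        · -- a i > 0, z i > 0
          have ha''nn : 0 ≤ a'' i := by
            rw [h6]
            positivity
          rw [max_eq_left h1.le, max_eq_left h2.le, max_eq_left ha''nn]
          simp only [ha''def]
          ring
        · -- a i < 0, z i < 0
          have ha''np : a'' i ≤ 0 := by
            rw [h6]
            exact mul_nonpos_iff.2 (Or.inr ⟨h2.le, hcc⟩)
          rw [max_eq_right h1.le, max_eq_right h2.le, max_eq_right ha''np]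
          ring
    have hsummax : ∑ i, max (a i) 0 = s * ∑ i, max (z i) 0 + ∑ i, max (a'' i) 0 := by
      rw [Finset.mul_sum, ← Finset.sum_add_distrib]
      exact Finset.sum_congr rfl (fun i _ => hsplitmax i)
    have hsumx : ∑ i, a i * x i = s * ∑ i, z i * x i + ∑ i, a'' i * x i := by
      rw [Finset.mul_sum, ← Finset.sum_add_distrib]
      refine Finset.sum_congr rfl (fun i _ => ?_)
      simp only [ha''def]
      ring
    by_cases ha''0 : a'' = 0
    · have hz1 : ∑ i, a'' i * x i = 0 := by simp [ha''0]
      have hz2 : ∑ i, max (a'' i) 0 = 0 := by simp [ha''0]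
      rw [hsumx, hsummax, hz1, hz2]
      have := mul_lt_mul_of_pos_left hfz hs
      linarith
    · have hcard'' : (suppF a'').card ≤ N := by
        have hsub : suppF a'' ⊆ (suppF a).erase im := by
          intro i hi
          have hi' : a'' i ≠ 0 := mem_suppF.1 hi
          refine Finset.mem_erase.2 ⟨?_, mem_suppF.2 (ha''supp i hi')⟩
          rintro rfl
          exact hi' ha''im
        have h4 := Finset.card_le_card hsub
        have h5 : ((suppF a).erase im).card = (suppF a).card - 1 :=
          Finset.card_erase_of_mem (mem_suppF.2 haim)
        have h7 : 0 < (suppF a).card := Finset.card_pos.2 ⟨im, mem_suppF.2 haim⟩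
        omega
      have hih := ih a'' hker'' ha''0 hcard''
      rw [hsumx, hsummax]
      have := mul_lt_mul_of_pos_left hfz hs
      linarith


lemma exists_eps (x : Fin n → ℝ)
    (hpos : ∀ a : Fin n → ℝ, rKer V a → a ≠ 0 → ∑ i, a i * x i < ∑ i, max (a i) 0) :
    ∃ ε : ℝ, 0 < ε ∧ ε ≤ 1/2 ∧ ∀ a : Fin n → ℝ, rKer V a →
      ∑ i, a i * x i ≤ (1 - ε) * ∑ i, max (a i) 0 := by
  classical
  by_cases hK : ∀ a : Fin n → ℝ, rKer V a → a = 0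
  · refine ⟨1/2, by norm_num, le_refl _, fun a ha => ?_⟩
    rw [hK a ha]
    simp
  · push_neg at hK
    obtain ⟨a₀, ha₀ker, ha₀ne⟩ := hK
    set T : Set (Fin n → ℝ) := {a | rKer V a ∧ ∑ i, |a i| = 1} with hT
    have hTclosed : IsClosed T := by
      have e1 : T = (⋂ j, {a : Fin n → ℝ | ∑ i, a i * (V i j : ℝ) = 0}) ∩
          {a : Fin n → ℝ | ∑ i, |a i| = 1} := by
        ext a
        simp [hT, rKer, Set.mem_iInter, forall_and]
      rw [e1]
      refine IsClosed.inter (isClosed_iInter (fun j => isClosed_eq ?_ continuous_const))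
        (isClosed_eq ?_ continuous_const)
      · exact continuous_finset_sum _ (fun i _ => (continuous_apply i).mul continuous_const)
      · exact continuous_finset_sum _ (fun i _ => (continuous_apply i).abs)
    have hTbdd : Bornology.IsBounded T := by
      refine (Metric.isBounded_closedBall (x := (0 : Fin n → ℝ)) (r := 1)).subset ?_
      intro a ⟨_, hsum⟩
      rw [Metric.mem_closedBall, dist_zero_right]
      rw [pi_norm_le_iff_of_nonneg (by norm_num)]
      intro i
      rw [Real.norm_eq_abs]
      calc |a i| ≤ ∑ k, |a k| := Finset.single_le_sum (fun k _ => abs_nonneg (a k))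
            (Finset.mem_univ i)
        _ = 1 := hsum
    have hTcompact : IsCompact T := Metric.isCompact_of_isClosed_isBounded hTclosed hTbdd
    have hr₀ : 0 < ∑ i, |a₀ i| := by
      obtain ⟨i, hi⟩ := ne_zero_iff_exists.1 ha₀ne
      refine Finset.sum_pos' (fun k _ => abs_nonneg _) ⟨i, Finset.mem_univ i, abs_pos.2 hi⟩
    have hTne : T.Nonempty := by
      refine ⟨fun i => a₀ i / (∑ k, |a₀ k|), ?_, ?_⟩
      · intro j
        have e2 : ∑ i, a₀ i / (∑ k, |a₀ k|) * (V i j : ℝ)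
            = (∑ k, |a₀ k|)⁻¹ * ∑ i, a₀ i * (V i j : ℝ) := by
          rw [Finset.mul_sum]
          exact Finset.sum_congr rfl (fun i _ => by ring)
        rw [e2, ha₀ker j, mul_zero]
      · show ∑ i, |a₀ i / (∑ k, |a₀ k|)| = 1
        have e3 : ∀ i : Fin n, |a₀ i / (∑ k, |a₀ k|)| = |a₀ i| / (∑ k, |a₀ k|) :=
          fun i => by rw [abs_div, abs_of_pos hr₀]
        calc ∑ i, |a₀ i / (∑ k, |a₀ k|)| = ∑ i, |a₀ i| / (∑ k, |a₀ k|) :=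
              Finset.sum_congr rfl (fun i _ => e3 i)
          _ = 1 := by rw [← Finset.sum_div]; field_simp
    set f : (Fin n → ℝ) → ℝ := fun a => (∑ i, max (a i) 0) - ∑ i, a i * x i with hf
    have hfc : Continuous f := by
      apply Continuous.sub
      · exact continuous_finset_sum _ (fun i _ => ((continuous_apply i).max continuous_const))
      · exact continuous_finset_sum _ (fun i _ => (continuous_apply i).mul continuous_const)
    obtain ⟨amin, haminT, hamin⟩ := hTcompact.exists_isMinOn hTne hfc.continuousOn
    have haminne : amin ≠ 0 := by
      rintro rfl
      have := haminT.2
      simp at this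
    have hm : 0 < f amin := by
      rw [hf]
      have := hpos amin haminT.1 haminne
      simp only [sub_pos]
      exact this
    refine ⟨min (f amin) (1/2), lt_min hm (by norm_num), min_le_right _ _, ?_⟩
    intro a haker
    by_cases hane : a = 0
    · rw [hane]
      simp
    · set r : ℝ := ∑ k, |a k| with hr
      have hrpos : 0 < r := by
        obtain ⟨i, hi⟩ := ne_zero_iff_exists.1 hane
        exact Finset.sum_pos' (fun k _ => abs_nonneg _) ⟨i, Finset.mem_univ i, abs_pos.2 hi⟩
      set b : Fin n → ℝ := fun i => a i / r with hb
      have hbT : b ∈ T := by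
        constructor
        · intro j
          have e2 : ∑ i, a i / r * (V i j : ℝ) = r⁻¹ * ∑ i, a i * (V i j : ℝ) := by
            rw [Finset.mul_sum]
            exact Finset.sum_congr rfl (fun i _ => by ring)
          show ∑ i, a i / r * (V i j : ℝ) = 0
          rw [e2, haker j, mul_zero]
        · show ∑ i, |a i / r| = 1
          have e3 : ∀ i : Fin n, |a i / r| = |a i| / r :=
            fun i => by rw [abs_div, abs_of_pos hrpos]
          calc ∑ i, |a i / r| = ∑ i, |a i| / r := Finset.sum_congr rfl (fun i _ => e3 i)
            _ = 1 := by rw [← Finset.sum_div, ← hr]; exact div_self hrpos.ne'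
      have hfb : min (f amin) (1/2) ≤ f b := le_trans (min_le_left _ _) (hamin hbT)
      set ε := min (f amin) (1/2) with hε
      have hεpos : 0 < ε := lt_min hm (by norm_num)
      -- ∑ max(b) ≤ 1
      have hmaxb : ∑ i, max (b i) 0 ≤ 1 := by
        have : ∀ i : Fin n, max (b i) 0 ≤ |b i| := fun i =>
          max_le (le_abs_self _) (abs_nonneg _)
        calc ∑ i, max (b i) 0 ≤ ∑ i, |b i| := Finset.sum_le_sum (fun i _ => this i)
          _ = 1 := hbT.2
      have hbineq : ∑ i, b i * x i ≤ (1 - ε) * ∑ i, max (b i) 0 := by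
        have h1 : ∑ i, b i * x i ≤ (∑ i, max (b i) 0) - ε := by
          have h9 : ε ≤ (∑ i, max (b i) 0) - ∑ i, b i * x i := hfb
          linarith
        have h2 : ε * ∑ i, max (b i) 0 ≤ ε := by
          calc ε * ∑ i, max (b i) 0 ≤ ε * 1 := by
                exact mul_le_mul_of_nonneg_left hmaxb hεpos.le
            _ = ε := mul_one _
        nlinarith
      -- scale back
      have hax : ∑ i, a i * x i = r * ∑ i, b i * x i := by
        rw [Finset.mul_sum]
        refine Finset.sum_congr rfl (fun i _ => ?_)
        rw [hb]
        show a i * x i = r * (a i / r * x i)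
        field_simp
      have hamax : ∑ i, max (a i) 0 = r * ∑ i, max (b i) 0 := by
        rw [Finset.mul_sum]
        refine Finset.sum_congr rfl (fun i _ => ?_)
        rw [hb]
        show max (a i) 0 = r * max (a i / r) 0
        rw [← max_mul_pos' hrpos]
        congr 1
        field_simp
      rw [hax, hamax]
      calc r * ∑ i, b i * x i ≤ r * ((1 - ε) * ∑ i, max (b i) 0) :=
            mul_le_mul_of_nonneg_left hbineq hrpos.le
        _ = (1 - ε) * (r * ∑ i, max (b i) 0) := by ring
  

lemma farkas_box (x : Fin n → ℝ) (ε : ℝ) (hε : 0 < ε) (hε2 : ε ≤ 1/2)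
    (hineq : ∀ a : Fin n → ℝ, rKer V a → ∑ i, a i * x i ≤ (1 - ε) * ∑ i, max (a i) 0) :
    ∃ y : Fin d → ℝ, ∀ i, x i - ∑ j, (V i j : ℝ) * y j ∈ Set.Ico (0:ℝ) 1 := by
  classical
  set Φ : (Fin n → ℝ) ≃L[ℝ] EuclideanSpace ℝ (Fin n) :=
    (PiLp.continuousLinearEquiv 2 ℝ (fun _ : Fin n => ℝ)).symm with hΦ
  have hΦapp : ∀ (f : Fin n → ℝ) (i : Fin n), (Φ f) i = f i := by
    intro f i
    rfl
  set B : Set (Fin n → ℝ) := Set.univ.pi (fun _ => Set.Icc (0:ℝ) (1 - ε)) with hB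
  set Z : Set (EuclideanSpace ℝ (Fin n)) := Φ '' B with hZ
  set u : Fin d → EuclideanSpace ℝ (Fin n) := fun j => Φ (fun i => (V i j : ℝ)) with hu
  set W : Submodule ℝ (EuclideanSpace ℝ (Fin n)) := Submodule.span ℝ (Set.range u) with hW
  set S : Set (EuclideanSpace ℝ (Fin n)) := Z + (W : Set (EuclideanSpace ℝ (Fin n))) with hS
  have hBcomp : IsCompact B := isCompact_univ_pi (fun _ => isCompact_Icc)
  have hZcomp : IsCompact Z := hBcomp.image Φ.continuous
  have hBconv : Convex ℝ B := convex_pi (fun i _ => convex_Icc _ _)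
  have hZconv : Convex ℝ Z := hBconv.linear_image Φ.toLinearEquiv.toLinearMap
  have hSclosed : IsClosed S :=
    IsClosed.add_left_of_isCompact (Submodule.closed_of_finiteDimensional W) hZcomp
  have hSconv : Convex ℝ S := hZconv.add W.convex
  have hmem : Φ x ∈ S := by
    by_contra hx
    obtain ⟨φ, β, hφS, hφx⟩ := geometric_hahn_banach_closed_point hSconv hSclosed hx
    set uv : EuclideanSpace ℝ (Fin n) := (InnerProductSpace.toDual ℝ _).symm φ with huv
    have hip : ∀ y : EuclideanSpace ℝ (Fin n), ⟪uv, y⟫ = φ y := by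
      intro y
      rw [huv]
      exact InnerProductSpace.toDual_symm_apply
    have h0Z : (0 : EuclideanSpace ℝ (Fin n)) ∈ Z :=
      ⟨0, fun i _ => by simp [Pi.zero_apply, Set.mem_Icc]; linarith, by simp⟩
    have hipsum : ∀ y : EuclideanSpace ℝ (Fin n), ⟪uv, y⟫ = ∑ i, uv i * y i := by
      intro y
      rw [PiLp.inner_apply]
      exact Finset.sum_congr rfl (fun i _ => by
        simp [RCLike.inner_apply, conj_trivial]; ring)
    have hker : rKer V (fun i => uv i) := by
      intro j
      have hwj : ∀ τ : ℝ, φ (τ • u j) < β := by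
        intro τ
        have hm : (0 : EuclideanSpace ℝ (Fin n)) + τ • u j ∈ S :=
          Set.add_mem_add h0Z (W.smul_mem τ (Submodule.subset_span ⟨j, rfl⟩))
        simpa using hφS _ hm
      have hφuj : φ (u j) = 0 := by
        by_contra hne
        have h1 := hwj ((β + 1) / φ (u j))
        rw [φ.map_smul, smul_eq_mul, div_mul_cancel₀ _ hne] at h1
        linarith
      have h2 : ⟪uv, u j⟫ = 0 := by rw [hip]; exact hφuj
      rw [hipsum] at h2
      show ∑ i, uv i * (V i j : ℝ) = 0
      rw [← h2]
      exact Finset.sum_congr rfl (fun i _ => rfl)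
    set tstar : Fin n → ℝ := fun i => if 0 < uv i then (1 - ε) else 0 with htstar
    have htB : tstar ∈ B := by
      intro i _
      by_cases h : 0 < uv i <;> simp only [htstar, if_pos, if_neg, h, if_true, if_false] <;>
        constructor <;> [linarith; linarith; exact le_refl 0; linarith]
    have htS : Φ tstar ∈ S := by
      rw [hS, hZ]
      have : Φ tstar + 0 ∈ Z + (W : Set (EuclideanSpace ℝ (Fin n))) :=
        Set.add_mem_add ⟨tstar, htB, rfl⟩ W.zero_mem
      simpa using this
    have hval : φ (Φ tstar) = (1 - ε) * ∑ i, max (uv i) 0 := by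
      rw [← hip, hipsum, Finset.mul_sum]
      refine Finset.sum_congr rfl (fun i _ => ?_)
      rw [hΦapp]
      by_cases h : 0 < uv i
      · rw [htstar]
        simp only [if_pos h]
        rw [max_eq_left h.le]
        ring
      · push_neg at h
        rw [htstar]
        simp only [if_neg (not_lt.2 h)]
        rw [max_eq_right h]
        ring
    have hxval : φ (Φ x) = ∑ i, uv i * x i := by
      rw [← hip, hipsum]
      exact Finset.sum_congr rfl (fun i _ => by rw [hΦapp])
    have hfinal := hineq (fun i => uv i) hker
    have h2 := hφS _ htS
    simp only [] at hfinal
    rw [hval] at h2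
    rw [hxval] at hφx
    linarith
  rw [hS] at hmem
  rw [Set.mem_add] at hmem
  obtain ⟨z, hzZ, w, hwW, hzw⟩ := hmem
  obtain ⟨t0, ht0B, ht0⟩ := hzZ
  obtain ⟨y, hy⟩ := (Submodule.mem_span_range_iff_exists_fun ℝ).1 hwW
  refine ⟨y, fun i => ?_⟩
  have hxi : x i = t0 i + ∑ j, y j * (V i j : ℝ) := by
    have e1 := congrFun (congrArg (fun (v : EuclideanSpace ℝ (Fin n)) => (v : Fin n → ℝ)) hzw) i
    have e2 : z i + w i = x i := by
      simpa [hΦapp] using e1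
    have e3 : z i = t0 i := by rw [← ht0, hΦapp]
    have e4 : w i = ∑ j, y j * (V i j : ℝ) := by
      rw [← hy]
      have : (∑ j, y j • u j) i = ∑ j, (y j • u j) i := by
        rw [WithLp.ofLp_sum]
        exact Finset.sum_apply i Finset.univ (fun j => (y j • u j).ofLp)
      rw [this]
      refine Finset.sum_congr rfl (fun j _ => ?_)
      rw [hu]
      show y j * (Φ (fun i => (V i j : ℝ))) i = y j * (V i j : ℝ)
      rw [hΦapp]
    rw [← e2, e3, e4]
  have ht0i := ht0B i (Set.mem_univ i)
  rw [Set.mem_Ico]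
  constructor
  · have : x i - ∑ j, (V i j : ℝ) * y j = t0 i := by
      rw [hxi]
      ring_nf
      rw [Finset.sum_congr rfl (fun j (_ : j ∈ Finset.univ) => mul_comm ((V i j : ℝ)) (y j))]
      ring
    rw [this]
    exact ht0i.1
  · have : x i - ∑ j, (V i j : ℝ) * y j = t0 i := by
      rw [hxi]
      ring_nf
      rw [Finset.sum_congr rfl (fun j (_ : j ∈ Finset.univ) => mul_comm ((V i j : ℝ)) (y j))]
      ring
    rw [this]
    have := ht0i.2
    linarith


end Aux

theorem conic_region_open_description
    (d n : ℕ) (hd : 1 ≤ d) (hn : 1 ≤ n)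
    (V : Fin n → Fin d → ℤ) (hV : GoodGens V) (x : Fin n → ℝ) :
    (∃ y : Fin d → ℝ, ∀ i, x i - ∑ j, (V i j : ℝ) * y j ∈ Set.Ico (0:ℝ) 1) ↔
    (∀ C : Finset (Fin n), IsCircuitV V C →
      ∀ a : Fin n → ℤ,
        (∀ j, ∑ i, a i * V i j = 0) →
        Finset.univ.gcd a = 1 →
        (∀ i, a i ≠ 0 ↔ i ∈ C) →
        (-(∑ i, max (-(a i : ℝ)) 0) < ∑ i, (a i : ℝ) * x i ∧
          ∑ i, (a i : ℝ) * x i < ∑ i, max ((a i : ℝ)) 0)) := by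
  classical
  constructor
  · rintro ⟨y, hy⟩ C hC a haker _hagcd hasupp
    set t : Fin n → ℝ := fun i => x i - ∑ j, (V i j : ℝ) * y j with htdef
    have ht0 : ∀ i, 0 ≤ t i := fun i => (hy i).1
    have ht1 : ∀ i, t i < 1 := fun i => (hy i).2
    have hCne : C.Nonempty := by
      by_contra hce
      rw [Finset.not_nonempty_iff_eq_empty] at hce
      apply hC.1
      have : IsEmpty {i // i ∈ C} := by
        rw [hce]
        exact ⟨fun ⟨_, h⟩ => by simp at h⟩
      exact linearIndependent_empty_type
    obtain ⟨i₁, hi₁⟩ := hCne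
    have hai₁ : a i₁ ≠ 0 := (hasupp i₁).2 hi₁
    have hkerr : rKer V (fun i => (a i : ℝ)) := by
      intro j
      have h0 := haker j
      have h1 : ((∑ i, a i * V i j : ℤ) : ℝ) = 0 := by rw [h0]; simp
      push_cast at h1
      exact h1
    have hpose : ∃ i, (0:ℝ) < (a i : ℝ) := by
      by_contra h
      push_neg at h
      have hb : rKer V (fun i => -(a i : ℝ)) := by
        intro j
        have h2 := hkerr j
        have e : ∑ i, -(a i : ℝ) * (V i j : ℝ) = -(∑ i, (a i : ℝ) * (V i j : ℝ)) := by
          rw [← Finset.sum_neg_distrib]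
          exact Finset.sum_congr rfl (fun i _ => by ring)
        rw [e]
        simpa using h2
      have hz := rKer_nonneg_eq_zero hV hb (fun i => by
        have := h i
        simp only [neg_nonneg] at *
        linarith)
      have := congrFun hz i₁
      simp only [Pi.zero_apply, neg_eq_zero, Int.cast_eq_zero] at this
      exact hai₁ this
    have hnege : ∃ i, ((a i : ℝ)) < 0 := by
      by_contra h
      push_neg at h
      have hz := rKer_nonneg_eq_zero hV hkerr (fun i => h i)
      have := congrFun hz i₁
      simp only [Pi.zero_apply, Int.cast_eq_zero] at this
      exact hai₁ this
    have hxt : ∑ i, (a i : ℝ) * x i = ∑ i, (a i : ℝ) * t i := by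
      have e : ∀ i : Fin n, (a i : ℝ) * x i
          = (a i : ℝ) * t i + (a i : ℝ) * ∑ j, (V i j : ℝ) * y j := by
        intro i
        rw [htdef]
        ring
      rw [Finset.sum_congr rfl (fun i _ => e i), Finset.sum_add_distrib]
      have e2 : ∑ i, (a i : ℝ) * ∑ j, (V i j : ℝ) * y j
          = ∑ j, (∑ i, (a i : ℝ) * (V i j : ℝ)) * y j := by
        have e3 : ∀ i : Fin n, (a i : ℝ) * ∑ j, (V i j : ℝ) * y j
            = ∑ j, (a i : ℝ) * (V i j : ℝ) * y j := by
          intro i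
          rw [Finset.mul_sum]
          exact Finset.sum_congr rfl (fun j _ => by ring)
        rw [Finset.sum_congr rfl (fun i _ => e3 i), Finset.sum_comm]
        exact Finset.sum_congr rfl (fun j _ => by rw [Finset.sum_mul])
      have e5 : ∀ j : Fin d, (∑ i, (a i : ℝ) * (V i j : ℝ)) * y j = 0 := by
        intro j
        have h9 : ∑ i, ((a i : ℝ)) * (V i j : ℝ) = 0 := hkerr j
        rw [h9, zero_mul]
      rw [e2, Finset.sum_congr rfl (fun j _ => e5 j)]
      simp
    constructor
    · rw [hxt]
      have h5 : ∑ i, -((a i : ℝ)) * t i < ∑ i, max (-(a i : ℝ)) 0 := by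
        obtain ⟨i₂, hi₂⟩ := hnege
        exact sum_mul_lt_sum_max _ t ht0 ht1 ⟨i₂, by linarith⟩
      have e4 : ∑ i, -((a i : ℝ)) * t i = -∑ i, ((a i : ℝ)) * t i := by
        rw [← Finset.sum_neg_distrib]
        exact Finset.sum_congr rfl (fun i _ => by ring)
      rw [e4] at h5
      linarith
    · rw [hxt]
      exact sum_mul_lt_sum_max _ t ht0 ht1 hpose
  · intro H
    have hpos : ∀ a : Fin n → ℝ, rKer V a → a ≠ 0 →
        ∑ i, a i * x i < ∑ i, max (a i) 0 := by
      intro a hk hne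
      exact sum_lt_max_of_circuits V x H n a hk hne
        (le_trans (Finset.card_le_univ _) (by simp))
    obtain ⟨ε, hε1, hε2, hineq⟩ := exists_eps V x hpos
    exact farkas_box V x ε hε1 hε2 hineq
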